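/- Let σ, σ' be configurations of a threshold automaton such that steady reachability from σ to σ' is witnessed by the assignment Y = {y_r}_{r∈R}. Suppose σ.κ(ℓ) > 0 for a location ℓ and there is a fireable cycle t₁, …, t_m at ℓ with respect to Y. Then t₁ is enabled at σ, and steady reachability from t₁(σ) to σ' is witnessed by an assignment Z = {z_r}_{r∈R} with Σ_{r∈R} z_r < Σ_{r∈R} y_r. -/

import Mathlib

/-!
Threshold automata (Konnov, Veith, Widder), following
"Complexity of Verification and Synthesis of Threshold Automata".
-/

/-- A threshold guard `x ⋈ a₀ + a₁·p₁ + … + a_{|Π|}·p_{|Π|}` over shared variables `V` and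
parameters `P`.  `isRise = true` means a *rise* guard `x ≥ …`, and `isRise = false` means a
*fall* guard `x < …`. -/
structure TGuard (V P : Type) where
  var : V
  isRise : Bool
  a0 : ℚ
  coef : P → ℚ

/-- A configuration `σ = (κ, g, p)`: numbers of processes in each location, values of the
shared variables, and values of the parameters. -/
structure Config (L V P : Type) where
  κ : L → ℕ
  g : V → ℕ
  p : P → ℕ

/-- A rule of a threshold automaton: source and target locations, a guard that is a
(finite) conjunction of threshold guards, and an update `V → {0,1}`. -/
structure TRule (L V P : Type) where
  src : L
  dst : L
  guard : List (TGuard V P)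
  upd : V → ℕ
  upd_le_one : ∀ v, upd v ≤ 1

/-- A threshold automaton `(L, I, Γ, R)` together with its environment `(Π, RC, N)`.
`L`, `V`, `P` are the types of locations, shared variables and parameters, and `R` is the
index type of rules. -/
structure TA (L V P R : Type) where
  initial : Set L
  initial_nonempty : initial.Nonempty
  rc : Set (P → ℕ)
  N : (P → ℕ) → ℕ
  rule : R → TRule L V P

variable {L V P R : Type}

/-- Satisfaction of a threshold guard by values `g` of the shared variables and `p` of the
parameters. -/
def TGuard.holds [Fintype P] (φ : TGuard V P) (g : V → ℕ) (p : P → ℕ) : Prop :=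
  if φ.isRise then φ.a0 + ∑ i : P, φ.coef i * (p i : ℚ) ≤ (g φ.var : ℚ)
  else (g φ.var : ℚ) < φ.a0 + ∑ i : P, φ.coef i * (p i : ℚ)

/-- A configuration enables a rule. -/
def TRule.enabledAt [Fintype P] (r : TRule L V P) (σ : Config L V P) : Prop :=
  0 < σ.κ r.src ∧ ∀ φ ∈ r.guard, φ.holds σ.g σ.p

/-- The result of firing a rule at a configuration. -/
def TRule.fire [DecidableEq L] (r : TRule L V P) (σ : Config L V P) : Config L V P where
  κ := fun ℓ => σ.κ ℓ + (if ℓ = r.dst then 1 else 0) - (if ℓ = r.src then 1 else 0)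
  g := fun v => σ.g v + r.upd v
  p := σ.p

namespace TA

variable [Fintype P] [DecidableEq L]

/-- `σ` is a configuration of `ta`: the parameters satisfy the resilience condition and the
total number of processes is `N(p)`. -/
def validConfig [Fintype L] (ta : TA L V P R) (σ : Config L V P) : Prop :=
  σ.p ∈ ta.rc ∧ ∑ ℓ : L, σ.κ ℓ = ta.N σ.p

/-- Initial configurations. -/
def isInitial [Fintype L] (ta : TA L V P R) (σ : Config L V P) : Prop :=
  ta.validConfig σ ∧ (∀ ℓ, ℓ ∉ ta.initial → σ.κ ℓ = 0) ∧ ∀ v, σ.g v = 0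

/-- A schedule (finite sequence of rules) is applicable to a configuration. -/
def applicable (ta : TA L V P R) : Config L V P → List R → Prop
  | _, [] => True
  | σ, r :: τ => (ta.rule r).enabledAt σ ∧ ta.applicable ((ta.rule r).fire σ) τ

/-- The configuration `τ(σ)` resulting from applying a schedule. -/
def apply (ta : TA L V P R) : Config L V P → List R → Config L V P
  | σ, [] => σ
  | σ, r :: τ => ta.apply ((ta.rule r).fire σ) τ

/-- The configurations visited by the path from `σ` along `τ` (including both endpoints). -/
def visited (ta : TA L V P R) : Config L V P → List R → List (Config L V P)
  | σ, [] => [σ]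
  | σ, r :: τ => σ :: ta.visited ((ta.rule r).fire σ) τ

/-- Reachability `σ →* σ'`. -/
def reaches (ta : TA L V P R) (σ σ' : Config L V P) : Prop :=
  ∃ τ : List R, ta.applicable σ τ ∧ ta.apply σ τ = σ'

/-- The set of all threshold guards occurring in rules of the automaton. -/
def guards (ta : TA L V P R) : Set (TGuard V P) :=
  {φ | ∃ r : R, φ ∈ (ta.rule r).guard}

/-- The context `ω(σ)`: rise guards of `ta` that are true in `σ` together with fall guards
of `ta` that are false in `σ`. -/
def context (ta : TA L V P R) (σ : Config L V P) : Set (TGuard V P) :=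
  {φ | φ ∈ ta.guards ∧ if φ.isRise then φ.holds σ.g σ.p else ¬ φ.holds σ.g σ.p}

/-- A schedule applicable at `σ` is steady if all configurations visited by the
corresponding path have the same context. -/
def steady (ta : TA L V P R) (σ : Config L V P) (τ : List R) : Prop :=
  ∀ σ' ∈ ta.visited σ τ, ta.context σ' = ta.context σ

end TA

/-- There is a chain of rules, all fired at least once according to `y`, starting at a
location populated in `σ` and leading to the rule `r`. -/
def TA.chainTo [Fintype P] (ta : TA L V P R) (y : R → ℕ) (σ : Config L V P) (r : R) : Prop :=
  ∃ (c : List R) (hne : c ≠ []),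
    (∀ r' ∈ c, 0 < y r') ∧
    0 < σ.κ (ta.rule (c.head hne)).src ∧
    List.Chain' (fun a b => (ta.rule a).dst = (ta.rule b).src) c ∧
    c.getLast hne = r

/-- The assignment `y : R → ℕ` witnesses steady reachability from `σ` to `σ'`. -/
def TA.witnessesSteady [Fintype P] [DecidableEq L] [Fintype R]
    (ta : TA L V P R) (σ σ' : Config L V P) (y : R → ℕ) : Prop :=
  σ.p = σ'.p ∧
  ta.context σ = ta.context σ' ∧
  (∀ ℓ : L, (σ'.κ ℓ : ℤ) - (σ.κ ℓ : ℤ) =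
      (∑ r : R, if (ta.rule r).dst = ℓ then (y r : ℤ) else 0) -
      (∑ r : R, if (ta.rule r).src = ℓ then (y r : ℤ) else 0)) ∧
  (∀ z : V, (σ'.g z : ℤ) - (σ.g z : ℤ) = ∑ r : R, (y r : ℤ) * ((ta.rule r).upd z : ℤ)) ∧
  (∀ r : R, 0 < y r → ∀ φ ∈ (ta.rule r).guard, φ.holds σ.g σ.p) ∧
  (∀ r : R, 0 < y r → ta.chainTo y σ r)

/-- A fireable cycle at location `ℓ` with respect to an assignment `y`: a sequence of rules,
all fired at least once according to `y`, consecutively linked, starting and ending at `ℓ`. -/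
def TA.fireableCycleAt (ta : TA L V P R) (y : R → ℕ) (ℓ : L) : Prop :=
  ∃ (c : List R) (hne : c ≠ []),
    (∀ r ∈ c, 0 < y r) ∧
    List.Chain' (fun a b => (ta.rule a).dst = (ta.rule b).src) c ∧
    (ta.rule (c.head hne)).src = ℓ ∧ (ta.rule (c.getLast hne)).dst = ℓ


section Aux

variable {V P : Type} [Fintype P]

lemma TGuard.holds_mono (φ : TGuard V P) {g g' : V → ℕ} (p : P → ℕ)
    (h : g φ.var ≤ g' φ.var) (hR : φ.isRise = true) (hg : φ.holds g p) : φ.holds g' p := by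
  simp only [TGuard.holds, hR, if_true] at *
  have : (g φ.var : ℚ) ≤ g' φ.var := by exact_mod_cast h
  linarith

lemma TGuard.holds_anti (φ : TGuard V P) {g g' : V → ℕ} (p : P → ℕ)
    (h : g φ.var ≤ g' φ.var) (hR : φ.isRise = false) (hg : φ.holds g' p) : φ.holds g p := by
  simp only [TGuard.holds, hR, if_false, Bool.false_eq_true] at *
  have : (g φ.var : ℚ) ≤ g' φ.var := by exact_mod_cast h
  linarith

lemma exists_split_last {α : Type*} {a : α} : ∀ {l : List α}, a ∈ l →
    ∃ l₁ l₂, l = l₁ ++ a :: l₂ ∧ a ∉ l₂ := by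
  intro l h
  induction l with
  | nil => cases h
  | cons b t ih =>
    by_cases ht : a ∈ t
    · obtain ⟨l₁, l₂, he, h2⟩ := ih ht
      exact ⟨b :: l₁, l₂, by rw [he]; rfl, h2⟩
    · have hab : a = b := by
        rcases List.mem_cons.1 h with h' | h'
        · exact h'
        · exact absurd h' ht
      exact ⟨[], t, by rw [hab]; rfl, ht⟩

lemma getLast_eq_of_eq {α : Type*} {l l' : List α} (h : l = l') (hl : l ≠ []) :
    l.getLast hl = l'.getLast (h ▸ hl) := by subst h; rfl

lemma getLast_split {α : Type*} (l₁ l₂ : List α) (a : α) (h : l₂ ≠ []) :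
    (l₁ ++ a :: l₂).getLast (by simp) = l₂.getLast h := by
  have e : l₁ ++ a :: l₂ = (l₁ ++ [a]) ++ l₂ := by simp
  rw [getLast_eq_of_eq e]
  exact List.getLast_append_of_ne_nil _ h

end Aux

/-- If `Y` witnesses steady reachability from `σ` to `σ'`, location `ℓ` satisfies
`σ.κ(ℓ) > 0` and `t₁, …, t_m` is a fireable cycle at `ℓ` with respect to `Y`, then `t₁` is
enabled at `σ` and steady reachability from `t₁(σ)` to `σ'` is witnessed by an assignment
`Z` with `Σ_r z_r < Σ_r y_r`. -/
theorem witness_decreases_with_cycle [Fintype P] [DecidableEq L] [Fintype L] [Fintype R]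
    (ta : TA L V P R) (σ σ' : Config L V P)
    (hσ : ta.validConfig σ) (hσ' : ta.validConfig σ')
    (y : R → ℕ) (hw : ta.witnessesSteady σ σ' y)
    (ℓ : L) (hκ : 0 < σ.κ ℓ)
    (c : List R) (hne : c ≠ [])
    (hy : ∀ r ∈ c, 0 < y r)
    (hchain : List.Chain' (fun a b => (ta.rule a).dst = (ta.rule b).src) c)
    (hhead : (ta.rule (c.head hne)).src = ℓ)
    (hlast : (ta.rule (c.getLast hne)).dst = ℓ) :
    (ta.rule (c.head hne)).enabledAt σ ∧
    ∃ z : R → ℕ, ta.witnessesSteady ((ta.rule (c.head hne)).fire σ) σ' z ∧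
      ∑ r : R, z r < ∑ r : R, y r := by
  classical
  set t₁ : R := c.head hne with ht1def
  set ℓD : L := (ta.rule t₁).dst with hDdef
  obtain ⟨hp, hctx, hflow, hvar, hguards, hchains⟩ := hw
  have ht1mem : t₁ ∈ c := List.head_mem hne
  have ht1pos : 0 < y t₁ := hy _ ht1mem
  -- t₁ is enabled at σ
  have henabled : (ta.rule t₁).enabledAt σ := by
    refine ⟨by rw [hhead]; exact hκ, hguards t₁ ht1pos⟩
  refine ⟨henabled, ?_⟩
  set σ₁ : Config L V P := (ta.rule t₁).fire σ with hσ₁def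
  set z : R → ℕ := fun r => if r = t₁ then y t₁ - 1 else y r with hzdef
  have hp1 : σ₁.p = σ.p := rfl
  have hg1 : ∀ v, σ₁.g v = σ.g v + (ta.rule t₁).upd v := fun v => rfl
  have hzy : ∀ r, 0 < z r → 0 < y r := by
    intro r hr
    by_cases h : r = t₁
    · subst h; exact ht1pos
    · simpa [hzdef, h] using hr
  have hzcast : ∀ r, (z r : ℤ) = (y r : ℤ) - (if r = t₁ then 1 else 0) := by
    intro r
    by_cases h : r = t₁
    · subst h; simp [hzdef]; omega
    · simp [hzdef, h]
  have hsum : ∀ f : R → ℤ, ∑ r : R, (z r : ℤ) * f r = (∑ r : R, (y r : ℤ) * f r) - f t₁ := by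
    intro f
    simp only [hzcast, sub_mul, ite_mul, one_mul, zero_mul, Finset.sum_sub_distrib]
    rw [Finset.sum_ite_eq' Finset.univ t₁ f]
    simp
  have hind : ∀ (w : R → ℕ) (Q : R → Prop) [DecidablePred Q],
      ∑ r : R, (if Q r then (w r : ℤ) else 0) = ∑ r : R, (w r : ℤ) * (if Q r then 1 else 0) := by
    intro w Q _
    refine Finset.sum_congr rfl fun r _ => ?_
    by_cases h : Q r <;> simp [h]
  -- κ of σ₁, as integers
  have hκsrc : 0 < σ.κ ((ta.rule t₁).src) := by rw [hhead]; exact hκ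
  have hκ1 : ∀ ℓ' : L, (σ₁.κ ℓ' : ℤ) =
      (σ.κ ℓ' : ℤ) + (if (ta.rule t₁).dst = ℓ' then 1 else 0)
        - (if (ta.rule t₁).src = ℓ' then 1 else 0) := by
    intro ℓ'
    have hk := hκsrc
    show ((σ.κ ℓ' + (if ℓ' = (ta.rule t₁).dst then 1 else 0)
        - (if ℓ' = (ta.rule t₁).src then 1 else 0) : ℕ) : ℤ) = _
    by_cases h2 : ℓ' = (ta.rule t₁).src
    · subst h2
      by_cases h1 : (ta.rule t₁).src = (ta.rule t₁).dst
      · simp [h1] <;> omega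
      · have h1' : ¬((ta.rule t₁).dst = (ta.rule t₁).src) := fun h => h1 h.symm
        simp [h1, h1'] <;> omega
    · by_cases h1 : ℓ' = (ta.rule t₁).dst
      · subst h1
        have h2' : ¬((ta.rule t₁).src = (ta.rule t₁).dst) := fun h => h2 h.symm
        simp [h2, h2'] <;> omega
      · have h1' : ¬((ta.rule t₁).dst = ℓ') := fun h => h1 h.symm
        have h2' : ¬((ta.rule t₁).src = ℓ') := fun h => h2 h.symm
        simp [h1, h2, h1', h2'] <;> omega
  -- shared variables comparisons
  have hgz : ∀ v, (σ'.g v : ℤ) - (σ₁.g v : ℤ) = ∑ r : R, (z r : ℤ) * ((ta.rule r).upd v : ℤ) := by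
    intro v
    rw [hsum fun r => ((ta.rule r).upd v : ℤ)]
    have := hvar v
    rw [hg1 v]
    push_cast
    linarith
  have hg1le : ∀ v, σ.g v ≤ σ₁.g v := by intro v; rw [hg1]; omega
  have hg2le : ∀ v, σ₁.g v ≤ σ'.g v := by
    intro v
    have h1 := hgz v
    have h2 : 0 ≤ ∑ r : R, (z r : ℤ) * ((ta.rule r).upd v : ℤ) :=
      Finset.sum_nonneg fun r _ => mul_nonneg (Int.ofNat_nonneg _) (Int.ofNat_nonneg _)
    omega
  -- guard truth transfers
  have hiff : ∀ φ ∈ ta.guards, (φ.holds σ.g σ.p ↔ φ.holds σ'.g σ.p) := by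
    intro φ hφ
    have h := Set.ext_iff.1 hctx φ
    simp only [TA.context, Set.mem_setOf_eq, hφ, true_and] at h
    rw [hp] at h ⊢
    cases hR : φ.isRise with
    | true => simpa [hR] using h
    | false =>
      simp only [hR, Bool.false_eq_true, if_false] at h
      exact not_iff_not.1 h
  have hholds1 : ∀ φ ∈ ta.guards, φ.holds σ.g σ.p → φ.holds σ₁.g σ.p := by
    intro φ hφ hh
    cases hR : φ.isRise with
    | true => exact φ.holds_mono _ (hg1le _) hR hh
    | false =>
      have h' : φ.holds σ'.g σ.p := (hiff φ hφ).1 hh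
      exact φ.holds_anti _ (hg2le _) hR h'
  -- context of σ₁
  have hctx1 : ta.context σ₁ = ta.context σ := by
    ext φ
    simp only [TA.context, Set.mem_setOf_eq, hp1]
    constructor
    · rintro ⟨hφ, hh⟩
      refine ⟨hφ, ?_⟩
      cases hR : φ.isRise with
      | true =>
        simp only [hR, if_true] at hh ⊢
        by_contra hc
        have : ¬ φ.holds σ'.g σ.p := fun h => hc ((hiff φ hφ).2 h)
        exact this (φ.holds_mono _ (hg2le _) hR hh)
      | false =>
        simp only [hR, Bool.false_eq_true, if_false] at hh ⊢
        intro hc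
        exact hh (hholds1 φ hφ hc)
    · rintro ⟨hφ, hh⟩
      refine ⟨hφ, ?_⟩
      cases hR : φ.isRise with
      | true =>
        simp only [hR, if_true] at hh ⊢
        exact hholds1 φ hφ hh
      | false =>
        simp only [hR, Bool.false_eq_true, if_false] at hh ⊢
        intro hc
        exact hh (φ.holds_anti _ (hg1le _) hR hc)
  -- decompose the cycle
  obtain ⟨rest, hcrest⟩ : ∃ rest, c = t₁ :: rest := ⟨c.tail, (List.cons_head_tail hne).symm⟩
  have hκ1D : 0 < σ₁.κ ℓD := by
    have h := hκ1 ℓD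
    rw [if_pos (show (ta.rule t₁).dst = ℓD from rfl)] at h
    by_cases h2 : (ta.rule t₁).src = ℓD
    · rw [if_pos h2] at h
      have hk2 : 0 < σ.κ ℓD := h2 ▸ hκsrc
      omega
    · rw [if_neg h2] at h
      omega
  -- the bridge: a z-positive chain from ℓD to ℓ
  have hbridge : ℓD ≠ ℓ → ∃ (br : List R) (hbne : br ≠ []),
      (∀ r ∈ br, 0 < z r) ∧ List.Chain' (fun a b => (ta.rule a).dst = (ta.rule b).src) br ∧
      (ta.rule (br.head hbne)).src = ℓD ∧ (ta.rule (br.getLast hbne)).dst = ℓ := by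
    intro hD
    have hrestne : rest ≠ [] := by
      rintro rfl
      apply hD
      have hgl : c.getLast hne = t₁ := by
        rw [getLast_eq_of_eq hcrest hne]
        rfl
      have hh : (ta.rule t₁).dst = ℓ := by rw [← hgl]; exact hlast
      exact hh
    have hchain' : List.Chain' (fun a b => (ta.rule a).dst = (ta.rule b).src) (t₁ :: rest) := by
      rw [← hcrest]; exact hchain
    have hlastrest : rest.getLast hrestne = c.getLast hne := by
      rw [getLast_eq_of_eq hcrest hne]
      exact (List.getLast_cons hrestne).symm
    by_cases hzt : 0 < z t₁
    · refine ⟨rest, hrestne, ?_, (List.isChain_cons.1 hchain').2, ?_, ?_⟩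
      · intro r hr
        by_cases h : r = t₁
        · subst h; exact hzt
        · simpa [hzdef, h] using hy r (by rw [hcrest]; exact List.mem_cons_of_mem _ hr)
      · have := (List.isChain_cons.1 hchain').1 (rest.head hrestne) (List.head?_eq_head hrestne)
        exact this.symm
      · rw [hlastrest]; exact hlast
    · -- z t₁ = 0; cut after the last occurrence of t₁ in rest (if any)
      by_cases ht : t₁ ∈ rest
      · obtain ⟨l₁, l₂, hsplit, hnotin⟩ := exists_split_last ht
        have hl2ne : l₂ ≠ [] := by
          rintro rfl
          apply hD
          have hgl : rest.getLast hrestne = t₁ := by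
            rw [getLast_eq_of_eq hsplit hrestne]
            exact List.getLast_append_singleton l₁
          have hh : (ta.rule t₁).dst = ℓ := by
            rw [← hgl, hlastrest]; exact hlast
          exact hh
        have hsuffix : (t₁ :: l₂) <:+ rest := ⟨l₁, hsplit.symm⟩
        have hchl2 : List.Chain' (fun a b => (ta.rule a).dst = (ta.rule b).src) (t₁ :: l₂) :=
          ((List.isChain_cons.1 hchain').2).suffix hsuffix
        refine ⟨l₂, hl2ne, ?_, (List.isChain_cons.1 hchl2).2, ?_, ?_⟩
        · intro r hr
          have hrt : r ≠ t₁ := fun h => hnotin (h ▸ hr)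
          have : r ∈ rest := hsplit ▸ (List.mem_append_right l₁ (List.mem_cons_of_mem _ hr))
          simpa [hzdef, hrt] using hy r (by rw [hcrest]; exact List.mem_cons_of_mem _ this)
        · exact ((List.isChain_cons.1 hchl2).1 (l₂.head hl2ne) (List.head?_eq_head hl2ne)).symm
        · have h12 : l₂.getLast hl2ne = rest.getLast hrestne := by
            rw [getLast_eq_of_eq hsplit hrestne]
            exact (getLast_split l₁ l₂ t₁ hl2ne).symm
          rw [h12, hlastrest]; exact hlast
      · refine ⟨rest, hrestne, ?_, (List.isChain_cons.1 hchain').2, ?_, ?_⟩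
        · intro r hr
          have hrt : r ≠ t₁ := fun h => ht (h ▸ hr)
          simpa [hzdef, hrt] using hy r (by rw [hcrest]; exact List.mem_cons_of_mem _ hr)
        · exact ((List.isChain_cons.1 hchain').1 (rest.head hrestne)
            (List.head?_eq_head hrestne)).symm
        · rw [hlastrest]; exact hlast
  -- chain repair
  have hchainz : ∀ r : R, 0 < z r → ta.chainTo z σ₁ r := by
    intro r hzr
    obtain ⟨d, hdne, hdpos, hdstart, hdchain, hdlast⟩ := hchains r (hzy r hzr)
    by_cases hcase : z t₁ = 0 ∧ t₁ ∈ d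
    · obtain ⟨hzt, htd⟩ := hcase
      obtain ⟨l₁, l₂, hsplit, hnotin⟩ := exists_split_last htd
      have hrt1 : r ≠ t₁ := by rintro rfl; rw [hzt] at hzr; exact absurd hzr (lt_irrefl 0)
      have hl2ne : l₂ ≠ [] := by
        rintro rfl
        apply hrt1
        rw [← hdlast, getLast_eq_of_eq hsplit hdne]
        exact List.getLast_append_singleton l₁
      have hsuffix : (t₁ :: l₂) <:+ d := ⟨l₁, hsplit.symm⟩
      have hchl2 : List.Chain' (fun a b => (ta.rule a).dst = (ta.rule b).src) (t₁ :: l₂) :=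
        hdchain.suffix hsuffix
      refine ⟨l₂, hl2ne, ?_, ?_, (List.isChain_cons.1 hchl2).2, ?_⟩
      · intro r' hr'
        have hrt : r' ≠ t₁ := fun h => hnotin (h ▸ hr')
        have : r' ∈ d := hsplit ▸ (List.mem_append_right l₁ (List.mem_cons_of_mem _ hr'))
        simpa [hzdef, hrt] using hdpos r' this
      · have : (ta.rule (l₂.head hl2ne)).src = ℓD :=
          ((List.isChain_cons.1 hchl2).1 (l₂.head hl2ne) (List.head?_eq_head hl2ne)).symm
        rw [this]; exact hκ1D
      · rw [← hdlast, getLast_eq_of_eq hsplit hdne]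
        exact (getLast_split l₁ l₂ t₁ hl2ne).symm
    · -- all rules of d are z-positive
      have hdz : ∀ r' ∈ d, 0 < z r' := by
        intro r' hr'
        by_cases h : r' = t₁
        · rcases Nat.eq_zero_or_pos (z r') with h0 | h0
          · exact absurd ⟨h ▸ h0, h ▸ hr'⟩ hcase
          · exact h0
        · simpa [hzdef, h] using hdpos r' hr'
      by_cases hstart : 0 < σ₁.κ ((ta.rule (d.head hdne)).src)
      · exact ⟨d, hdne, hdz, hstart, hdchain, hdlast⟩
      · -- the start location was depopulated: it must be ℓ, and ℓD ≠ ℓ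
        have hkz := hκ1 ((ta.rule (d.head hdne)).src)
        have hstart0 : σ₁.κ ((ta.rule (d.head hdne)).src) = 0 := Nat.eq_zero_of_not_pos hstart
        rw [hstart0] at hkz
        have hsrceq : (ta.rule t₁).src = (ta.rule (d.head hdne)).src := by
          by_contra hne'
          rw [if_neg hne'] at hkz
          by_cases h : (ta.rule t₁).dst = (ta.rule (d.head hdne)).src
          · rw [if_pos h] at hkz; omega
          · rw [if_neg h] at hkz; omega
        have hDne : ℓD ≠ ℓ := by
          intro hDeq
          rw [if_pos hsrceq] at hkz
          rw [if_pos (show (ta.rule t₁).dst = (ta.rule (d.head hdne)).src by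
            rw [hDdef] at hDeq
            rw [hDeq, ← hhead, ← hsrceq])] at hkz
          omega
        obtain ⟨br, hbne, hbpos, hbchain, hbhead, hblast⟩ := hbridge hDne
        have hdheadℓ : (ta.rule (d.head hdne)).src = ℓ := by
          rw [← hsrceq]; exact hhead
        have happne : br ++ d ≠ [] := by simp [hbne]
        refine ⟨br ++ d, happne, ?_, ?_, ?_, ?_⟩
        · intro r' hr'
          rcases List.mem_append.1 hr' with h | h
          · exact hbpos r' h
          · exact hdz r' h
        · rw [List.head_append_of_ne_nil hbne, hbhead]; exact hκ1D
        · refine List.IsChain.append hbchain hdchain ?_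
          intro x hx yy hyy
          have hx' : br.getLast hbne = x := by
            rw [List.getLast?_eq_getLast_of_ne_nil hbne] at hx
            exact Option.mem_some_iff.1 hx
          have hyy' : d.head hdne = yy := by
            rw [List.head?_eq_head hdne] at hyy
            exact Option.mem_some_iff.1 hyy
          subst hx'
          subst hyy'
          rw [hblast, hdheadℓ]
        · rw [List.getLast_append_of_ne_nil _ hdne]; exact hdlast
  -- assemble the witness
  refine ⟨z, ⟨?_, ?_, ?_, ?_, ?_, hchainz⟩, ?_⟩
  · rw [hp1]; exact hp
  · rw [hctx1]; exact hctx
  · intro ℓ'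
    have e1 : ∑ r : R, (if (ta.rule r).dst = ℓ' then (z r : ℤ) else 0) =
        (∑ r : R, if (ta.rule r).dst = ℓ' then (y r : ℤ) else 0)
          - (if (ta.rule t₁).dst = ℓ' then 1 else 0) := by
      rw [hind z, hind y, hsum fun r => if (ta.rule r).dst = ℓ' then 1 else 0]
    have e2 : ∑ r : R, (if (ta.rule r).src = ℓ' then (z r : ℤ) else 0) =
        (∑ r : R, if (ta.rule r).src = ℓ' then (y r : ℤ) else 0)
          - (if (ta.rule t₁).src = ℓ' then 1 else 0) := by
      rw [hind z, hind y, hsum fun r => if (ta.rule r).src = ℓ' then 1 else 0]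
    rw [e1, e2, hκ1 ℓ']
    have hf := hflow ℓ'
    by_cases h1 : (ta.rule t₁).dst = ℓ' <;> by_cases h2 : (ta.rule t₁).src = ℓ'
    · rw [if_pos h1, if_pos h2]; linarith
    · rw [if_pos h1, if_neg h2]; linarith
    · rw [if_neg h1, if_pos h2]; linarith
    · rw [if_neg h1, if_neg h2]; linarith
  · intro v
    exact hgz v
  · intro r hr φ hφ
    have hyr := hzy r hr
    have hφg : φ ∈ ta.guards := ⟨r, hφ⟩
    have := hholds1 φ hφg (hguards r hyr φ hφ)
    rwa [hp1]
  · apply Finset.sum_lt_sum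
    · intro i _
      show (if i = t₁ then y t₁ - 1 else y i) ≤ y i
      by_cases h : i = t₁
      · rw [if_pos h, h]; omega
      · rw [if_neg h]
    · refine ⟨t₁, Finset.mem_univ _, ?_⟩
      show (if t₁ = t₁ then y t₁ - 1 else y t₁) < y t₁
      rw [if_pos rfl]
      omega
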